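/- Let S = F₂⟦x, y, z, w⟧ / (x·z, x·w, (z + w)²). Then the image of z + w in S is nilpotent, the nilradical of S is the ideal generated by the image of z + w, and the maximal reduced quotient of S is isomorphic as an F₂-algebra to F₂⟦x, y, z⟧ / (x·z). -/

import Mathlib

open MvPowerSeries

/-- The ideal `(x·z, x·w, (z + w)²)` of `𝔽₂⟦x, y, z, w⟧`, with variables
`x = X 0`, `y = X 1`, `z = X 2`, `w = X 3`. -/
noncomputable def I16 : Ideal (MvPowerSeries (Fin 4) (ZMod 2)) :=
  Ideal.span {X 0 * X 2, X 0 * X 3, (X 2 + X 3) ^ 2}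

noncomputable section Aux16

open Finsupp Finset

private abbrev F2 := ZMod 2
private abbrev R4 := MvPowerSeries (Fin 4) F2
private abbrev R3 := MvPowerSeries (Fin 3) F2

/-- Monomial exponent builder for 4 variables. -/
private def m4 (a b u v : ℕ) : Fin 4 →₀ ℕ := Finsupp.equivFunOnFinite.symm ![a, b, u, v]
/-- Monomial exponent builder for 3 variables. -/
private def m3 (a b u : ℕ) : Fin 3 →₀ ℕ := Finsupp.equivFunOnFinite.symm ![a, b, u]

@[simp] private lemma m4_apply (a b u v : ℕ) (i : Fin 4) :
    (m4 a b u v) i = ![a, b, u, v] i :=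
  rfl

@[simp] private lemma m3_apply (a b u : ℕ) (i : Fin 3) :
    (m3 a b u) i = ![a, b, u] i :=
  rfl

private lemma m4_eta (n : Fin 4 →₀ ℕ) : m4 (n 0) (n 1) (n 2) (n 3) = n := by
  ext i; fin_cases i <;> simp

private lemma m3_eta (n : Fin 3 →₀ ℕ) : m3 (n 0) (n 1) (n 2) = n := by
  ext i; fin_cases i <;> simp

private lemma m4_inj {a b u v a' b' u' v' : ℕ} (h : m4 a b u v = m4 a' b' u' v') :
    a = a' ∧ b = b' ∧ u = u' ∧ v = v' := by
  refine ⟨?_, ?_, ?_, ?_⟩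
  · have := DFunLike.congr_fun h 0; simpa using this
  · have := DFunLike.congr_fun h 1; simpa using this
  · have := DFunLike.congr_fun h 2; simpa using this
  · have := DFunLike.congr_fun h 3; simpa using this

/-- The exponent-collapse map corresponding to `x ↦ x, y ↦ y, z ↦ z, w ↦ z`. -/
private def pr (m : Fin 4 →₀ ℕ) : Fin 3 →₀ ℕ := m3 (m 0) (m 1) (m 2 + m 3)

@[simp] private lemma pr_apply0 (m : Fin 4 →₀ ℕ) : pr m 0 = m 0 := by simp [pr]
@[simp] private lemma pr_apply1 (m : Fin 4 →₀ ℕ) : pr m 1 = m 1 := by simp [pr]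
@[simp] private lemma pr_apply2 (m : Fin 4 →₀ ℕ) : pr m 2 = m 2 + m 3 := by simp [pr]

private lemma pr_add (a b : Fin 4 →₀ ℕ) : pr (a + b) = pr a + pr b := by
  ext i; fin_cases i <;> simp [pr] <;> omega

@[simp] private lemma pr_zero : pr 0 = 0 := by
  ext i; fin_cases i <;> simp [pr]

/-- Fiber of `pr` over the exponent `n`, as a finite set. -/
private def Fib (n : Fin 3 →₀ ℕ) : Finset (Fin 4 →₀ ℕ) :=
  (Finset.range (n 2 + 1)).image fun j => m4 (n 0) (n 1) (n 2 - j) j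

private lemma mem_Fib {m : Fin 4 →₀ ℕ} {n : Fin 3 →₀ ℕ} : m ∈ Fib n ↔ pr m = n := by
  constructor
  · intro h
    simp only [Fib, Finset.mem_image, Finset.mem_range] at h
    obtain ⟨j, hj, rfl⟩ := h
    ext i; fin_cases i <;> simp [pr] <;> omega
  · rintro rfl
    simp only [Fib, Finset.mem_image, Finset.mem_range]
    refine ⟨m 3, by simp, ?_⟩
    simp only [pr_apply0, pr_apply1, pr_apply2, Nat.add_sub_cancel]
    exact m4_eta m

private lemma sum_Fib (n : Fin 3 →₀ ℕ) (f : (Fin 4 →₀ ℕ) → F2) :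
    ∑ m ∈ Fib n, f m = ∑ j ∈ Finset.range (n 2 + 1), f (m4 (n 0) (n 1) (n 2 - j) j) := by
  rw [Fib, Finset.sum_image]
  intro j _ j' _ h
  exact (m4_inj h).2.2.2


/-- The substitution `w ↦ z` as a map of power series rings, on the level of functions. -/
private def PhiFun (f : R4) : R3 := fun n => ∑ m ∈ Fib n, MvPowerSeries.coeff (R := F2) m f

private lemma coeff_PhiFun (f : R4) (n : Fin 3 →₀ ℕ) :
    MvPowerSeries.coeff (R := F2) n (PhiFun f) = ∑ m ∈ Fib n, MvPowerSeries.coeff (R := F2) m f := rfl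

/-- The substitution `w ↦ z` as a ring homomorphism `𝔽₂⟦x,y,z,w⟧ →+* 𝔽₂⟦x,y,z⟧`. -/
private def Phi : R4 →+* R3 where
  toFun := PhiFun
  map_zero' := by
    ext n; simp [coeff_PhiFun]
  map_add' f g := by
    ext n; simp [coeff_PhiFun, Finset.sum_add_distrib]
  map_one' := by
    ext n
    rw [coeff_PhiFun, MvPowerSeries.coeff_one]
    simp only [MvPowerSeries.coeff_one]
    rw [Finset.sum_ite_eq' (Fib n) 0 (fun _ => (1 : F2))]
    have hm : (0 : Fin 4 →₀ ℕ) ∈ Fib n ↔ n = 0 := by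
      rw [mem_Fib, pr_zero]; exact eq_comm
    by_cases hn : n = 0
    · rw [if_pos (hm.mpr hn), if_pos hn]
    · rw [if_neg (fun h => hn (hm.mp h)), if_neg hn]
  map_mul' f g := by
    ext n
    rw [coeff_PhiFun, MvPowerSeries.coeff_mul]
    simp only [MvPowerSeries.coeff_mul, coeff_PhiFun, Finset.sum_mul_sum,
      ← Finset.sum_product']
    rw [Finset.sum_sigma', Finset.sum_sigma']
    apply Finset.sum_nbij' (i := fun x => (⟨(pr x.2.1, pr x.2.2), x.2⟩ :
        (p : (Fin 3 →₀ ℕ) × (Fin 3 →₀ ℕ)) × ((Fin 4 →₀ ℕ) × (Fin 4 →₀ ℕ))))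
      (j := fun y => (⟨y.2.1 + y.2.2, y.2⟩ :
        (m : Fin 4 →₀ ℕ) × ((Fin 4 →₀ ℕ) × (Fin 4 →₀ ℕ))))
    · rintro ⟨m, a, b⟩ hx
      simp only [Finset.mem_sigma, mem_Fib, Finset.HasAntidiagonal.mem_antidiagonal] at hx
      refine Finset.mem_sigma.mpr ⟨Finset.HasAntidiagonal.mem_antidiagonal.mpr ?_,
        Finset.mem_product.mpr ⟨mem_Fib.mpr rfl, mem_Fib.mpr rfl⟩⟩
      rw [← pr_add, hx.2, hx.1]
    · rintro ⟨⟨c, d⟩, a, b⟩ hy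
      simp only [Finset.mem_sigma, Finset.HasAntidiagonal.mem_antidiagonal, Finset.mem_product, mem_Fib] at hy
      exact Finset.mem_sigma.mpr ⟨mem_Fib.mpr (by rw [pr_add, hy.2.1, hy.2.2, hy.1]),
        Finset.HasAntidiagonal.mem_antidiagonal.mpr rfl⟩
    · rintro ⟨m, a, b⟩ hx
      simp only [Finset.mem_sigma, mem_Fib, Finset.HasAntidiagonal.mem_antidiagonal] at hx
      exact Sigma.ext hx.2 (by simp)
    · rintro ⟨⟨c, d⟩, a, b⟩ hy
      simp only [Finset.mem_sigma, Finset.HasAntidiagonal.mem_antidiagonal, Finset.mem_product, mem_Fib] at hy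
      have : (pr a, pr b) = (c, d) := by rw [hy.2.1, hy.2.2]
      exact Sigma.ext this (by simp)
    · rintro ⟨m, a, b⟩ _
      rfl

private lemma Phi_X (s : Fin 4) (t : Fin 3) (h : pr (Finsupp.single s 1) = Finsupp.single t 1) :
    Phi (MvPowerSeries.X s) = (MvPowerSeries.X t : R3) := by
  ext n
  show MvPowerSeries.coeff (R := F2) n (PhiFun _) = _
  rw [coeff_PhiFun]
  simp only [MvPowerSeries.coeff_X]
  rw [Finset.sum_ite_eq' (Fib n) (Finsupp.single s 1) (fun _ => (1 : F2))]
  by_cases hn : n = Finsupp.single t 1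
  · subst hn
    rw [if_pos (mem_Fib.mpr h), if_pos rfl]
  · rw [if_neg, if_neg hn]
    intro hmem
    exact hn ((mem_Fib.mp hmem).symm.trans h)


/-- Extension of an exponent on 3 variables by `0` on the fourth. -/
private def emb (m : Fin 3 →₀ ℕ) : Fin 4 →₀ ℕ := m4 (m 0) (m 1) (m 2) 0
/-- Restriction of an exponent on 4 variables to the first three. -/
private def res (n : Fin 4 →₀ ℕ) : Fin 3 →₀ ℕ := m3 (n 0) (n 1) (n 2)

private lemma res_emb (m : Fin 3 →₀ ℕ) : res (emb m) = m := by
  ext i; fin_cases i <;> simp [res, emb]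

private lemma emb_res {n : Fin 4 →₀ ℕ} (h : n 3 = 0) : emb (res n) = n := by
  ext i; fin_cases i <;> simp [res, emb, h]

private lemma res_add (a b : Fin 4 →₀ ℕ) : res (a + b) = res a + res b := by
  ext i; fin_cases i <;> simp [res]

private lemma emb_add (a b : Fin 3 →₀ ℕ) : emb (a + b) = emb a + emb b := by
  ext i; fin_cases i <;> simp [emb]

@[simp] private lemma emb_apply3 (m : Fin 3 →₀ ℕ) : emb m 3 = 0 := by simp [emb]

/-- The inclusion `𝔽₂⟦x,y,z⟧ → 𝔽₂⟦x,y,z,w⟧` on the level of functions. -/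
private def IotaFun (f : R3) : R4 :=
  fun n => if n 3 = 0 then MvPowerSeries.coeff (R := F2) (res n) f else 0

private lemma coeff_IotaFun (f : R3) (n : Fin 4 →₀ ℕ) :
    MvPowerSeries.coeff (R := F2) n (IotaFun f) =
      if n 3 = 0 then MvPowerSeries.coeff (R := F2) (res n) f else 0 := rfl

private lemma eq_zero_iff4 {n : Fin 4 →₀ ℕ} : n = 0 ↔ n 3 = 0 ∧ res n = 0 := by
  constructor
  · rintro rfl; exact ⟨rfl, by ext i; fin_cases i <;> simp [res]⟩
  · rintro ⟨h1, h2⟩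
    rw [← emb_res h1, h2]
    ext i; fin_cases i <;> simp [emb]

/-- The inclusion `𝔽₂⟦x,y,z⟧ →+* 𝔽₂⟦x,y,z,w⟧`. -/
private def Iota : R3 →+* R4 where
  toFun := IotaFun
  map_zero' := by ext n; simp [coeff_IotaFun]
  map_add' f g := by
    ext n
    simp only [coeff_IotaFun, map_add]
    split_ifs <;> simp
  map_one' := by
    ext n
    rw [coeff_IotaFun, MvPowerSeries.coeff_one]
    simp only [MvPowerSeries.coeff_one]
    by_cases h1 : n 3 = 0
    · rw [if_pos h1]
      by_cases h2 : res n = 0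
      · rw [if_pos h2, if_pos (eq_zero_iff4.mpr ⟨h1, h2⟩)]
      · rw [if_neg h2, if_neg (fun h => h2 (eq_zero_iff4.mp h).2)]
    · rw [if_neg h1, if_neg (fun h => h1 (eq_zero_iff4.mp h).1)]
  map_mul' f g := by
    show IotaFun (f * g) = IotaFun f * IotaFun g
    ext n
    rw [coeff_IotaFun, MvPowerSeries.coeff_mul (φ := IotaFun f)]
    by_cases h : n 3 = 0
    · rw [if_pos h, MvPowerSeries.coeff_mul]
      have key : ∀ p ∈ Finset.HasAntidiagonal.antidiagonal n,
          MvPowerSeries.coeff (R := F2) p.1 (IotaFun f) * MvPowerSeries.coeff (R := F2) p.2 (IotaFun g) =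
          MvPowerSeries.coeff (R := F2) (res p.1) f * MvPowerSeries.coeff (R := F2) (res p.2) g := by
        rintro ⟨a, b⟩ hp
        rw [Finset.HasAntidiagonal.mem_antidiagonal] at hp
        have h3 : a 3 = 0 ∧ b 3 = 0 := by
          have := DFunLike.congr_fun hp 3
          simp only [Finsupp.add_apply] at this
          omega
        rw [coeff_IotaFun, coeff_IotaFun, if_pos h3.1, if_pos h3.2]
      rw [Finset.sum_congr rfl key]
      apply Finset.sum_nbij' (i := fun q => (emb q.1, emb q.2)) (j := fun p => (res p.1, res p.2))
      · rintro ⟨c, d⟩ hq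
        rw [Finset.HasAntidiagonal.mem_antidiagonal] at hq ⊢
        rw [← emb_add, hq, emb_res h]
      · rintro ⟨a, b⟩ hp
        rw [Finset.HasAntidiagonal.mem_antidiagonal] at hp ⊢
        rw [← res_add, hp]
      · rintro ⟨c, d⟩ _
        simp [res_emb]
      · rintro ⟨a, b⟩ hp
        rw [Finset.HasAntidiagonal.mem_antidiagonal] at hp
        have h3 : a 3 = 0 ∧ b 3 = 0 := by
          have := DFunLike.congr_fun hp 3
          simp only [Finsupp.add_apply] at this
          omega
        simp [emb_res h3.1, emb_res h3.2]
      · rintro ⟨c, d⟩ _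
        simp [res_emb]
    · rw [if_neg h]
      symm
      apply Finset.sum_eq_zero
      rintro ⟨a, b⟩ hp
      rw [Finset.HasAntidiagonal.mem_antidiagonal] at hp
      have h3 : ¬ (a 3 = 0) ∨ ¬ (b 3 = 0) := by
        have := DFunLike.congr_fun hp 3
        simp only [Finsupp.add_apply] at this
        omega
      rcases h3 with h3 | h3
      · rw [coeff_IotaFun f, if_neg h3, zero_mul]
      · rw [coeff_IotaFun g, if_neg h3, mul_zero]

private lemma Iota_X (s : Fin 3) (t : Fin 4)
    (h : emb (Finsupp.single s 1) = Finsupp.single t 1) :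
    Iota (MvPowerSeries.X s) = (MvPowerSeries.X t : R4) := by
  ext n
  show MvPowerSeries.coeff (R := F2) n (IotaFun _) = _
  rw [coeff_IotaFun]
  simp only [MvPowerSeries.coeff_X]
  by_cases h1 : n 3 = 0
  · rw [if_pos h1]
    by_cases h2 : res n = Finsupp.single s 1
    · rw [if_pos h2, if_pos]
      rw [← emb_res h1, h2, h]
    · rw [if_neg h2, if_neg]
      intro hn
      apply h2
      rw [hn, ← h, res_emb]
  · rw [if_neg h1, if_neg]
    intro hn
    apply h1
    rw [hn, ← h, emb_apply3]

private lemma Phi_Iota (f : R3) : Phi (Iota f) = f := by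
  ext n
  show MvPowerSeries.coeff (R := F2) n (PhiFun (IotaFun f)) = _
  rw [coeff_PhiFun, sum_Fib]
  have key : ∀ j ∈ Finset.range (n 2 + 1),
      MvPowerSeries.coeff (R := F2) (m4 (n 0) (n 1) (n 2 - j) j) (IotaFun f) =
      if j = 0 then MvPowerSeries.coeff (R := F2) n f else 0 := by
    intro j _
    rw [coeff_IotaFun]
    by_cases hj : j = 0
    · subst hj
      rw [if_pos (by simp), if_pos rfl]
      congr 1
      have : res (m4 (n 0) (n 1) (n 2 - 0) 0) = m3 (n 0) (n 1) (n 2) := by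
        ext i; fin_cases i <;> simp [res]
      rw [this, m3_eta]
    · rw [if_neg (by simpa using hj), if_neg hj]
  rw [Finset.sum_congr rfl key, Finset.sum_ite_eq' (Finset.range (n 2 + 1)) 0
    (fun _ => MvPowerSeries.coeff (R := F2) n f), if_pos (by simp)]


private lemma addself {σ : Type*} (a : MvPowerSeries σ F2) : a + a = 0 := by
  ext n
  rw [map_add, map_zero, CharTwo.add_self_eq_zero]

/-- Concrete values of `Phi` and `Iota` on the variables. -/
private lemma Phi_X0 : Phi (X 0 : R4) = (X 0 : R3) :=
  Phi_X 0 0 (by ext i; fin_cases i <;> simp [pr, Finsupp.single_apply])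
private lemma Phi_X2 : Phi (X 2 : R4) = (X 2 : R3) :=
  Phi_X 2 2 (by ext i; fin_cases i <;> simp [pr, Finsupp.single_apply])
private lemma Phi_X3 : Phi (X 3 : R4) = (X 2 : R3) :=
  Phi_X 3 2 (by ext i; fin_cases i <;> simp [pr, Finsupp.single_apply])
private lemma Iota_X0 : Iota (X 0 : R3) = (X 0 : R4) :=
  Iota_X 0 0 (by ext i; fin_cases i <;> simp [emb, Finsupp.single_apply])
private lemma Iota_X2 : Iota (X 2 : R3) = (X 2 : R4) :=
  Iota_X 2 2 (by ext i; fin_cases i <;> simp [emb, Finsupp.single_apply])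

private lemma Phi_zw : Phi ((X 2 : R4) + X 3) = 0 := by
  rw [map_add, Phi_X2, Phi_X3, addself]

/-- Division lemma: a series in the kernel of `Phi` is divisible by `z + w`. -/
private lemma dvd_of_Phi_eq_zero {f : R4} (hf : Phi f = 0) : ((X 2 : R4) + X 3) ∣ f := by
  classical
  -- the candidate quotient
  set g : R4 := fun m => ∑ i ∈ Finset.range (m 3 + 1),
    MvPowerSeries.coeff (R := F2) (m4 (m 0) (m 1) (m 2 + m 3 + 1 - i) i) f with hg
  have coeff_g : ∀ m : Fin 4 →₀ ℕ, MvPowerSeries.coeff (R := F2) m g =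
      ∑ i ∈ Finset.range (m 3 + 1),
        MvPowerSeries.coeff (R := F2) (m4 (m 0) (m 1) (m 2 + m 3 + 1 - i) i) f := fun m => rfl
  -- the hypothesis, coefficientwise
  have H : ∀ a b c : ℕ,
      ∑ j ∈ Finset.range (c + 1), MvPowerSeries.coeff (R := F2) (m4 a b (c - j) j) f = 0 := by
    intro a b c
    have := congrArg (MvPowerSeries.coeff (R := F2) (m3 a b c)) hf
    rw [map_zero] at this
    rw [show Phi f = PhiFun f from rfl, coeff_PhiFun, sum_Fib] at this
    simpa using this
  refine ⟨g, ?_⟩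
  ext n
  symm
  rw [add_mul, map_add]
  rw [MvPowerSeries.X_def, MvPowerSeries.X_def,
    MvPowerSeries.coeff_monomial_mul, MvPowerSeries.coeff_monomial_mul]
  have hle2 : (Finsupp.single (2 : Fin 4) 1 ≤ n) ↔ 1 ≤ n 2 := Finsupp.single_le_iff
  have hle3 : (Finsupp.single (3 : Fin 4) 1 ≤ n) ↔ 1 ≤ n 3 := Finsupp.single_le_iff
  set a := n 0 with ha; set b := n 1 with hb; set u := n 2 with hu0; set v := n 3 with hv0
  set t : ℕ → F2 := fun i => MvPowerSeries.coeff (R := F2) (m4 a b (u + v - i) i) f with ht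
  have hcn : MvPowerSeries.coeff (R := F2) n f = t v := by
    rw [ht]; simp only [Nat.add_sub_cancel]
    rw [show m4 a b u v = n from m4_eta n]
  have Hsum : ∑ j ∈ Finset.range (u + v + 1), t j = 0 := H a b (u + v)
  have e2 : 1 ≤ u → MvPowerSeries.coeff (R := F2) (n - Finsupp.single (2 : Fin 4) 1) g
      = ∑ i ∈ Finset.range (v + 1), t i := by
    intro hu
    have c0 : ((n - Finsupp.single 2 1 : Fin 4 →₀ ℕ)) 0 = a := by
      rw [Finsupp.tsub_apply]; simp [Finsupp.single_apply]; rfl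
    have c1 : ((n - Finsupp.single 2 1 : Fin 4 →₀ ℕ)) 1 = b := by
      rw [Finsupp.tsub_apply]; simp [Finsupp.single_apply]; rfl
    have c2 : ((n - Finsupp.single 2 1 : Fin 4 →₀ ℕ)) 2 = u - 1 := by
      rw [Finsupp.tsub_apply]; simp [Finsupp.single_apply]; rfl
    have c3 : ((n - Finsupp.single 2 1 : Fin 4 →₀ ℕ)) 3 = v := by
      rw [Finsupp.tsub_apply]; simp [Finsupp.single_apply]; rfl
    rw [coeff_g, c0, c1, c2, c3]
    refine Finset.sum_congr rfl fun i _ => ?_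
    have hexp : u - 1 + v + 1 - i = u + v - i := by omega
    rw [hexp]
  have e3 : 1 ≤ v → MvPowerSeries.coeff (R := F2) (n - Finsupp.single (3 : Fin 4) 1) g
      = ∑ i ∈ Finset.range v, t i := by
    intro hv
    have c0 : ((n - Finsupp.single 3 1 : Fin 4 →₀ ℕ)) 0 = a := by
      rw [Finsupp.tsub_apply]; simp [Finsupp.single_apply]; rfl
    have c1 : ((n - Finsupp.single 3 1 : Fin 4 →₀ ℕ)) 1 = b := by
      rw [Finsupp.tsub_apply]; simp [Finsupp.single_apply]; rfl
    have c2 : ((n - Finsupp.single 3 1 : Fin 4 →₀ ℕ)) 2 = u := by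
      rw [Finsupp.tsub_apply]; simp [Finsupp.single_apply]; rfl
    have c3 : ((n - Finsupp.single 3 1 : Fin 4 →₀ ℕ)) 3 = v - 1 := by
      rw [Finsupp.tsub_apply]; simp [Finsupp.single_apply]; rfl
    rw [coeff_g, c0, c1, c2, c3]
    have hrange : v - 1 + 1 = v := by omega
    rw [hrange]
    refine Finset.sum_congr rfl fun i _ => ?_
    have hexp : u + (v - 1) + 1 - i = u + v - i := by omega
    rw [hexp]
  by_cases h2 : 1 ≤ u <;> by_cases h3 : 1 ≤ v
  · rw [if_pos (hle2.mpr h2), if_pos (hle3.mpr h3), one_mul, one_mul, e2 h2, e3 h3, hcn,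
      Finset.sum_range_succ, add_comm (∑ i ∈ Finset.range v, t i) (t v), add_assoc,
      CharTwo.add_self_eq_zero, add_zero]
  · rw [if_pos (hle2.mpr h2), if_neg (fun hh => h3 (hle3.mp hh)), add_zero, one_mul, e2 h2,
      hcn]
    have hv : v = 0 := by omega
    rw [hv, Finset.sum_range_one]
  · rw [if_neg (fun hh => h2 (hle2.mp hh)), if_pos (hle3.mpr h3), zero_add, one_mul, e3 h3,
      hcn]
    have hu : u = 0 := by omega
    rw [hu, zero_add, Finset.sum_range_succ] at Hsum
    have := congrArg (fun x => x + t v) Hsum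
    simpa [add_assoc, CharTwo.add_self_eq_zero] using this
  · rw [if_neg (fun hh => h2 (hle2.mp hh)), if_neg (fun hh => h3 (hle3.mp hh)), add_zero,
      hcn]
    have hu : u = 0 := by omega
    have hv : v = 0 := by omega
    rw [hu, hv, Finset.sum_range_one] at Hsum
    rw [hv, ← Hsum]


section Primes

variable {σ : Type*} [DecidableEq σ]

/-- "Evaluation at `X s = 0`" as a function. -/
private def Ev0Fun (s : σ) (f : MvPowerSeries σ F2) : MvPowerSeries σ F2 :=
  fun n => if n s = 0 then MvPowerSeries.coeff (R := F2) n f else 0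

private lemma coeff_Ev0Fun (s : σ) (f : MvPowerSeries σ F2) (n : σ →₀ ℕ) :
    MvPowerSeries.coeff (R := F2) n (Ev0Fun s f) =
      if n s = 0 then MvPowerSeries.coeff (R := F2) n f else 0 := rfl

/-- "Evaluation at `X s = 0`" as a ring homomorphism. -/
private def Ev0 (s : σ) : MvPowerSeries σ F2 →+* MvPowerSeries σ F2 where
  toFun := Ev0Fun s
  map_zero' := by ext n; simp [coeff_Ev0Fun]
  map_add' f g := by
    ext n
    simp only [coeff_Ev0Fun, map_add]
    split_ifs <;> simp
  map_one' := by
    ext n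
    rw [coeff_Ev0Fun, MvPowerSeries.coeff_one]
    by_cases h1 : n s = 0
    · rw [if_pos h1]
    · rw [if_neg h1, if_neg (fun h => h1 (by rw [h]; simp))]
  map_mul' f g := by
    show Ev0Fun s (f * g) = Ev0Fun s f * Ev0Fun s g
    ext n
    rw [coeff_Ev0Fun, MvPowerSeries.coeff_mul (φ := Ev0Fun s f)]
    by_cases h : n s = 0
    · rw [if_pos h, MvPowerSeries.coeff_mul]
      refine Finset.sum_congr rfl ?_
      rintro ⟨a, b⟩ hp
      rw [Finset.HasAntidiagonal.mem_antidiagonal] at hp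
      have h3 : a s = 0 ∧ b s = 0 := by
        have := DFunLike.congr_fun hp s
        simp only [Finsupp.add_apply] at this
        omega
      rw [coeff_Ev0Fun, coeff_Ev0Fun, if_pos h3.1, if_pos h3.2]
    · rw [if_neg h]
      symm
      apply Finset.sum_eq_zero
      rintro ⟨a, b⟩ hp
      rw [Finset.HasAntidiagonal.mem_antidiagonal] at hp
      have h3 : ¬ (a s = 0) ∨ ¬ (b s = 0) := by
        have := DFunLike.congr_fun hp s
        simp only [Finsupp.add_apply] at this
        omega
      rcases h3 with h3 | h3
      · rw [coeff_Ev0Fun s f, if_neg h3, zero_mul]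
      · rw [coeff_Ev0Fun s g, if_neg h3, mul_zero]

private lemma X_dvd_iff_Ev0 {s : σ} {f : MvPowerSeries σ F2} :
    (X s : MvPowerSeries σ F2) ∣ f ↔ Ev0 s f = 0 := by
  rw [MvPowerSeries.X_dvd_iff]
  constructor
  · intro h
    ext n
    show MvPowerSeries.coeff (R := F2) n (Ev0Fun s f) = 0
    rw [coeff_Ev0Fun]
    split_ifs with hn
    · exact h n hn
    · rfl
  · intro h n hn
    have := congrArg (MvPowerSeries.coeff (R := F2) n) h
    rw [map_zero] at this
    rw [show Ev0 s f = Ev0Fun s f from rfl, coeff_Ev0Fun, if_pos hn] at this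
    exact this

private lemma X_prime (s : σ) : Prime (X s : MvPowerSeries σ F2) := by
  refine ⟨?_, ?_, ?_⟩
  · intro h
    have := congrArg (MvPowerSeries.coeff (R := F2) (Finsupp.single s 1)) h
    rw [MvPowerSeries.coeff_index_single_self_X, map_zero] at this
    exact one_ne_zero this
  · intro h
    have := MvPowerSeries.isUnit_iff_constantCoeff.mp h
    rw [MvPowerSeries.constantCoeff_X] at this
    exact not_isUnit_zero this
  · intro a b hab
    rw [X_dvd_iff_Ev0] at hab
    rw [map_mul] at hab
    rcases mul_eq_zero.mp hab with h | h
    · exact Or.inl (X_dvd_iff_Ev0.mpr h)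
    · exact Or.inr (X_dvd_iff_Ev0.mpr h)

private lemma X_mul_X_dvd {s t : σ} {f : MvPowerSeries σ F2} (hst : s ≠ t)
    (h1 : (X s : MvPowerSeries σ F2) ∣ f) (h2 : (X t : MvPowerSeries σ F2) ∣ f) :
    (X s : MvPowerSeries σ F2) * X t ∣ f := by
  obtain ⟨c, rfl⟩ := h1
  have hnd : ¬ ((X t : MvPowerSeries σ F2) ∣ X s) := by
    rw [MvPowerSeries.X_dvd_iff]
    intro h
    have := h (Finsupp.single s 1) (by rw [Finsupp.single_eq_of_ne' hst])
    rw [MvPowerSeries.coeff_index_single_self_X] at this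
    exact one_ne_zero this
  rcases (X_prime t).2.2 _ _ h2 with h | h
  · exact absurd h hnd
  · exact mul_dvd_mul_left _ h

private lemma span_XX_isRadical {s t : σ} (hst : s ≠ t) :
    (Ideal.span {(X s * X t : MvPowerSeries σ F2)}).IsRadical := by
  intro y hy
  obtain ⟨k, hk⟩ := Ideal.mem_radical_iff.mp hy
  rw [Ideal.mem_span_singleton] at hk
  have hs : (X s : MvPowerSeries σ F2) ∣ y :=
    (X_prime s).dvd_of_dvd_pow (dvd_trans (dvd_mul_right _ _) hk)
  have ht : (X t : MvPowerSeries σ F2) ∣ y :=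
    (X_prime t).dvd_of_dvd_pow (dvd_trans (dvd_mul_left _ _) hk)
  exact Ideal.mem_span_singleton.mpr (X_mul_X_dvd hst hs ht)

end Primes

/-! ### Assembly -/

private def J3 : Ideal R3 := Ideal.span {(X 0 * X 2 : R3)}
private def K4 : Ideal R4 := Ideal.span {(X 0 * X 2 : R4), X 2 + X 3}

private def theta : R4 →+* R3 ⧸ J3 := (Ideal.Quotient.mk J3).comp Phi

private lemma theta_surjective : Function.Surjective theta := by
  intro q
  obtain ⟨y, rfl⟩ := Ideal.Quotient.mk_surjective q
  exact ⟨Iota y, by simp [theta, Phi_Iota]⟩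

private lemma ker_theta : RingHom.ker theta = K4 := by
  apply le_antisymm
  · intro f hf
    rw [RingHom.mem_ker, theta, RingHom.comp_apply, Ideal.Quotient.eq_zero_iff_mem, J3,
      Ideal.mem_span_singleton] at hf
    obtain ⟨c, hc⟩ := hf
    have h1 : f - Iota (Phi f) ∈ K4 := by
      obtain ⟨q, hq⟩ := dvd_of_Phi_eq_zero (f := f - Iota (Phi f))
        (by rw [map_sub, Phi_Iota, sub_self])
      rw [hq]
      exact Ideal.mul_mem_right _ _ (Ideal.subset_span (by simp))
    have h2 : Iota (Phi f) ∈ K4 := by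
      rw [hc, map_mul, map_mul, Iota_X0, Iota_X2]
      exact Ideal.mul_mem_right _ _ (Ideal.subset_span (by simp))
    have := add_mem h1 h2
    rwa [sub_add_cancel] at this
  · rw [K4, Ideal.span_le]
    rintro x hx
    simp only [Set.mem_insert_iff, Set.mem_singleton_iff] at hx
    rcases hx with rfl | rfl
    · rw [SetLike.mem_coe, RingHom.mem_ker, theta, RingHom.comp_apply, map_mul, Phi_X0, Phi_X2,
        Ideal.Quotient.eq_zero_iff_mem]
      exact Ideal.subset_span rfl
    · rw [SetLike.mem_coe, RingHom.mem_ker, theta, RingHom.comp_apply, Phi_zw, map_zero]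

private def E : (R4 ⧸ K4) ≃+* R3 ⧸ J3 :=
  (Ideal.quotEquivOfEq ker_theta.symm).trans (RingHom.quotientKerEquivOfSurjective theta_surjective)

private lemma K4_isRadical : K4.IsRadical := by
  rw [Ideal.isRadical_iff_quotient_reduced]
  have : IsReduced (R3 ⧸ J3) :=
    (Ideal.isRadical_iff_quotient_reduced J3).mp (span_XX_isRadical (by decide))
  exact isReduced_of_injective (E : (R4 ⧸ K4) ≃+* R3 ⧸ J3) E.injective

end Aux16

private lemma I16_le_K4 : I16 ≤ K4 := by
  rw [I16, Ideal.span_le]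
  rintro x hx
  simp only [Set.mem_insert_iff, Set.mem_singleton_iff] at hx
  rcases hx with rfl | rfl | rfl
  · exact Ideal.subset_span (by simp)
  · have hx3 : (X 0 : R4) * X 3 = X 0 * X 2 + X 0 * (X 2 + X 3) := by
      rw [mul_add, ← add_assoc, addself, zero_add]
    rw [SetLike.mem_coe, hx3]
    exact add_mem (Ideal.subset_span (by simp))
      (Ideal.mul_mem_left _ _ (Ideal.subset_span (by simp)))
  · rw [SetLike.mem_coe, sq]
    exact Ideal.mul_mem_left _ _ (Ideal.subset_span (by simp))

private lemma radical_I16 : I16.radical = K4 := by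
  apply le_antisymm
  · exact le_trans (Ideal.radical_mono I16_le_K4) K4_isRadical
  · rw [K4, Ideal.span_le]
    rintro x hx
    simp only [Set.mem_insert_iff, Set.mem_singleton_iff] at hx
    rcases hx with rfl | rfl
    · exact Ideal.le_radical (Ideal.subset_span (by simp))
    · exact Ideal.mem_radical_iff.mpr ⟨2, Ideal.subset_span (by simp)⟩

set_option maxHeartbeats 2000000 in
set_option synthInstance.maxHeartbeats 1000000 in
/-- Let `S = 𝔽₂⟦x, y, z, w⟧/(xz, xw, (z + w)²)`. Then the image of `z + w` in `S` is
nilpotent, the nilradical of `S` is generated by this image, and the maximal reduced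
quotient `S/nilradical S` is isomorphic as an `𝔽₂`-algebra to `𝔽₂⟦x, y, z⟧/(xz)`. -/
theorem stmt16 :
    IsNilpotent (Ideal.Quotient.mk I16 (X 2 + X 3)) ∧
    nilradical (MvPowerSeries (Fin 4) (ZMod 2) ⧸ I16) =
      Ideal.span {Ideal.Quotient.mk I16 (X 2 + X 3)} ∧
    Nonempty
      (((MvPowerSeries (Fin 4) (ZMod 2) ⧸ I16) ⧸
          nilradical (MvPowerSeries (Fin 4) (ZMod 2) ⧸ I16)) ≃ₐ[ZMod 2]
        (MvPowerSeries (Fin 3) (ZMod 2) ⧸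
          Ideal.span {(X 0 * X 2 : MvPowerSeries (Fin 3) (ZMod 2))})) := by
  have h0 : Ideal.Quotient.mk I16 ((X 0 : R4) * X 2) = 0 :=
    Ideal.Quotient.eq_zero_iff_mem.mpr (Ideal.subset_span (by simp))
  have hnilp : IsNilpotent (Ideal.Quotient.mk I16 ((X 2 : R4) + X 3)) := by
    refine ⟨2, ?_⟩
    rw [← map_pow, Ideal.Quotient.eq_zero_iff_mem]
    exact Ideal.subset_span (by simp)
  have hnil : nilradical (R4 ⧸ I16) =
      Ideal.span {Ideal.Quotient.mk I16 ((X 2 : R4) + X 3)} := by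
    apply le_antisymm
    · intro x hx
      obtain ⟨f, rfl⟩ := Ideal.Quotient.mk_surjective x
      obtain ⟨k, hk⟩ := mem_nilradical.mp hx
      rw [← map_pow, Ideal.Quotient.eq_zero_iff_mem] at hk
      have hfK : f ∈ K4 := radical_I16 ▸ (Ideal.mem_radical_iff.mpr ⟨k, hk⟩)
      rw [K4] at hfK
      obtain ⟨p, q, hpq⟩ := Ideal.mem_span_pair.mp hfK
      rw [← hpq]
      have hmk : (Ideal.Quotient.mk I16) (p * (X 0 * X 2) + q * (X 2 + X 3)) =
          (Ideal.Quotient.mk I16) q * (Ideal.Quotient.mk I16) ((X 2 : R4) + X 3) := by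
        rw [map_add (Ideal.Quotient.mk I16) (p * (X 0 * X 2)) (q * (X 2 + X 3)),
          map_mul (Ideal.Quotient.mk I16) p (X 0 * X 2),
          map_mul (Ideal.Quotient.mk I16) q ((X 2 : R4) + X 3), h0, mul_zero, zero_add]
      rw [hmk]
      exact Ideal.mul_mem_left _ _ (Ideal.subset_span rfl)
    · rw [Ideal.span_le, Set.singleton_subset_iff]
      exact mem_nilradical.mpr hnilp
  have hmap : K4.map (Ideal.Quotient.mk I16) =
      Ideal.span {Ideal.Quotient.mk I16 ((X 2 : R4) + X 3)} := by
    rw [K4, Ideal.map_span, Set.image_insert_eq, Set.image_singleton, h0]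
    exact Submodule.span_insert_zero
  refine ⟨hnilp, hnil, ?_⟩
  have e1 : ((R4 ⧸ I16) ⧸ nilradical (R4 ⧸ I16)) ≃+* (R4 ⧸ K4) :=
    (Ideal.quotEquivOfEq (hnil.trans hmap.symm)).trans
      (DoubleQuot.quotQuotEquivQuotOfLE I16_le_K4)
  have E2 : ((R4 ⧸ I16) ⧸ nilradical (R4 ⧸ I16)) ≃+* (R3 ⧸ J3) := e1.trans E
  refine ⟨AlgEquiv.ofRingEquiv (f := E2) fun x => ?_⟩
  have hzm := RingHom.ext_zmod (E2.toRingHom.comp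
    (algebraMap (ZMod 2) ((R4 ⧸ I16) ⧸ nilradical (R4 ⧸ I16)))) (algebraMap (ZMod 2) (R3 ⧸ J3))
  exact RingHom.congr_fun hzm x
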